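/- There does not exist a sequence (g_n) of continuous functions g_n : ℝ² → ℂ, each having no zeros, such that g_n converges to φ uniformly on every compact subset of ℝ². In other words, the function φ cannot be approximated arbitrarily well by zero-free continuous complex-valued functions with respect to local uniform convergence. -/

import Mathlib

open Real Filter

lemma ratio_mem_slitPlane {w z : ℂ} (hz : z ≠ 0) (h : ‖w - z‖ < ‖z‖) :
    w / z ∈ Complex.slitPlane := by
  rw [Complex.mem_slitPlane_iff]
  left
  have h1 : ‖w / z - 1‖ < 1 := by
    rw [show w / z - 1 = (w - z) / z by field_simp, norm_div,
      div_lt_one (norm_pos_iff.mpr hz)]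
    exact h
  have h2 : |(w / z - 1).re| ≤ ‖w / z - 1‖ := Complex.abs_re_le_norm _
  have h3 : (w / z).re = 1 + (w / z - 1).re := by simp
  rw [h3]
  have := neg_abs_le ((w / z - 1).re)
  linarith

/-- A continuous function into `2πiℤ` on an interval has equal endpoint values. -/
lemma endpoints_eq_of_exp_eq_one {a b : ℝ} (hab : a ≤ b) {d : ℝ → ℂ}
    (hc : ContinuousOn d (Set.Icc a b)) (h1 : ∀ t ∈ Set.Icc a b, Complex.exp (d t) = 1) :
    d b = d a := by
  have key : ∀ t ∈ Set.Icc a b, ∃ k : ℤ, d t = k * (2 * π * Complex.I) := fun t ht =>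
    Complex.exp_eq_one_iff.mp (h1 t ht)
  have ha : a ∈ Set.Icc a b := ⟨le_refl a, hab⟩
  have hb : b ∈ Set.Icc a b := ⟨hab, le_refl b⟩
  obtain ⟨ka, hka⟩ := key a ha
  obtain ⟨kb, hkb⟩ := key b hb
  have him : ContinuousOn (fun t => (d t).im) (Set.Icc a b) :=
    Complex.continuous_im.comp_continuousOn hc
  have himv : ∀ k : ℤ, ((k : ℂ) * (2 * π * Complex.I)).im = k * (2 * π) := by
    intro k; simp
  have hpi := Real.pi_pos
  by_cases hk : ka = kb
  · rw [hka, hkb, hk]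
  · exfalso
    -- the value `v = (min ka kb) * 2π + π` is attained, contradiction with parity
    obtain ⟨m, hm1, hm2⟩ : ∃ m : ℤ, ((m : ℝ) * (2 * π) + π) ∈
        Set.uIcc ((fun t => (d t).im) a) ((fun t => (d t).im) b) ∧ True := by
      simp only [hka, hkb, himv]
      rcases lt_or_gt_of_ne hk with hlt | hlt
      · refine ⟨ka, ?_, trivial⟩
        have hc1 : (ka : ℝ) + 1 ≤ kb := by exact_mod_cast hlt
        rw [Set.mem_uIcc]; left; constructor <;> nlinarith
      · refine ⟨kb, ?_, trivial⟩
        have hc1 : (kb : ℝ) + 1 ≤ ka := by exact_mod_cast hlt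
        rw [Set.mem_uIcc]; right; constructor <;> nlinarith
    have hsub := intermediate_value_uIcc
      (by rwa [Set.uIcc_of_le hab] : ContinuousOn (fun t => (d t).im) (Set.uIcc a b))
    obtain ⟨t, ht, htv⟩ := hsub hm1
    rw [Set.uIcc_of_le hab] at ht
    obtain ⟨k, hkt⟩ := key t ht
    have hval : (k : ℝ) * (2 * π) = (m : ℝ) * (2 * π) + π := by
      rw [← htv]; simp only [hkt, himv]
    have hcast : ((2 * (k - m) : ℤ) : ℝ) = 1 := by push_cast; nlinarith
    have : (2 * (k - m) : ℤ) = 1 := by exact_mod_cast hcast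
    omega


/-- Continuous logarithm of a zero-free continuous function along an interval. -/
lemma exists_log_on_Icc (f : ℝ → ℂ) (hf : Continuous f) (h0 : ∀ t, f t ≠ 0)
    (a b : ℝ) (hab : a ≤ b) :
    ∃ ℓ : ℝ → ℂ, ContinuousOn ℓ (Set.Icc a b) ∧
      ∀ t ∈ Set.Icc a b, Complex.exp (ℓ t) = f t := by
  -- minimum of ‖f‖ on [a,b]
  obtain ⟨t₀, ht₀, hmin⟩ := isCompact_Icc.exists_isMinOn (Set.nonempty_Icc.mpr hab)
    (hf.norm.continuousOn : ContinuousOn (fun t => ‖f t‖) (Set.Icc a b))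
  set m : ℝ := ‖f t₀‖ with hm
  have hmpos : 0 < m := norm_pos_iff.mpr (h0 t₀)
  have hmle : ∀ t ∈ Set.Icc a b, m ≤ ‖f t‖ := fun t ht => hmin ht
  -- uniform continuity
  have huc := isCompact_Icc.uniformContinuousOn_of_continuous
    (hf.continuousOn : ContinuousOn f (Set.Icc a b))
  rw [Metric.uniformContinuousOn_iff] at huc
  obtain ⟨δ, hδpos, hδ⟩ := huc m hmpos
  -- choose N
  obtain ⟨N, hN⟩ := exists_nat_gt ((b - a) / δ)
  have hNpos : 0 < (N : ℝ) := lt_of_le_of_lt (div_nonneg (by linarith) hδpos.le) hN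
  have hstep : (b - a) / N < δ := by
    rw [div_lt_iff₀ hNpos]
    calc b - a = ((b - a) / δ) * δ := by field_simp
    _ < N * δ := by exact mul_lt_mul_of_pos_right hN hδpos
    _ = δ * N := mul_comm _ _
  set c : ℕ → ℝ := fun j => a + j * ((b - a) / N) with hc
  have hca : ∀ j : ℕ, a ≤ c j := fun j => by
    have : 0 ≤ (j : ℝ) * ((b - a) / N) :=
      mul_nonneg (Nat.cast_nonneg j) (div_nonneg (by linarith) hNpos.le)
    simp [hc]; linarith
  have hcmono : ∀ j : ℕ, c j ≤ c (j + 1) := fun j => by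
    have : 0 ≤ (b - a) / N := div_nonneg (by linarith) hNpos.le
    simp only [hc]
    have : (j : ℝ) * ((b - a) / N) ≤ (j + 1 : ℕ) * ((b - a) / N) := by
      apply mul_le_mul_of_nonneg_right _ this
      exact_mod_cast Nat.le_succ j
    linarith
  have hcdiff : ∀ j : ℕ, c (j + 1) - c j = (b - a) / N := fun j => by
    simp only [hc]; push_cast; ring
  have hcN : c N = b := by
    simp only [hc]; field_simp; ring
  -- clamped points stay in [a,b] and consecutive ones are close
  have hmemcl : ∀ t ∈ Set.Icc a b, ∀ j : ℕ, min t (c j) ∈ Set.Icc a b := by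
    intro t ht j
    exact ⟨le_min ht.1 (hca j), min_le_of_left_le ht.2⟩
  have hclose : ∀ t ∈ Set.Icc a b, ∀ j : ℕ,
      dist (f (min t (c (j + 1)))) (f (min t (c j))) < m := by
    intro t ht j
    apply hδ _ (hmemcl t ht (j + 1)) _ (hmemcl t ht j)
    rw [Real.dist_eq, abs_lt]
    have h1 : min t (c j) ≤ min t (c (j + 1)) := min_le_min le_rfl (hcmono j)
    have h2 : min t (c (j + 1)) - min t (c j) ≤ c (j + 1) - c j := by
      rcases le_total t (c j) with h | h
      · rw [min_eq_left h, min_eq_left (h.trans (hcmono j)), sub_self, hcdiff j]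
        exact div_nonneg (by linarith) hNpos.le
      · rw [min_eq_right h]
        have := min_le_right t (c (j+1))
        linarith
    rw [hcdiff j] at h2
    constructor <;> [linarith; linarith [lt_of_le_of_lt h2 hstep]]
  -- ratios are in the slit plane
  have hslit : ∀ t ∈ Set.Icc a b, ∀ j : ℕ,
      f (min t (c (j + 1))) / f (min t (c j)) ∈ Complex.slitPlane := by
    intro t ht j
    apply ratio_mem_slitPlane (h0 _)
    rw [← dist_eq_norm]
    exact lt_of_lt_of_le (hclose t ht j) (hmle _ (hmemcl t ht j))
  refine ⟨fun t => Complex.log (f a) +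
    ∑ j ∈ Finset.range N, Complex.log (f (min t (c (j + 1))) / f (min t (c j))), ?_, ?_⟩
  · apply ContinuousOn.add continuousOn_const
    apply continuousOn_finset_sum
    intro j _
    apply ContinuousOn.clog
    · exact ContinuousOn.div
        ((hf.comp (continuous_id.min continuous_const)).continuousOn)
        ((hf.comp (continuous_id.min continuous_const)).continuousOn)
        (fun t _ => h0 _)
    · intro t ht
      exact hslit t ht j
  · intro t ht
    rw [Complex.exp_add, Complex.exp_sum]
    have hexpl : ∀ j ∈ Finset.range N,
        Complex.exp (Complex.log (f (min t (c (j + 1))) / f (min t (c j)))) =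
          f (min t (c (j + 1))) / f (min t (c j)) := by
      intro j _
      exact Complex.exp_log (div_ne_zero (h0 _) (h0 _))
    rw [Finset.prod_congr rfl hexpl, Complex.exp_log (h0 a)]
    have htel : ∀ n : ℕ, ∏ j ∈ Finset.range n,
        f (min t (c (j + 1))) / f (min t (c j)) = f (min t (c n)) / f (min t (c 0)) := by
      intro n
      induction n with
      | zero => simp [div_self (h0 _)]
      | succ n ih =>
        rw [Finset.prod_range_succ, ih, div_mul_div_comm]
        rw [div_eq_div_iff (mul_ne_zero (h0 _) (h0 _)) (h0 _)]
        ring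
    rw [htel N, hcN]
    have hc0 : c 0 = a := by simp [hc]
    rw [hc0, min_eq_left ht.2, min_eq_right ht.1, mul_div_assoc']
    exact mul_div_cancel_left₀ _ (h0 a)

/-- Two continuous logarithms of the same function have the same increment. -/
lemma log_increment_eq {a b : ℝ} (hab : a ≤ b) {f ℓ₁ ℓ₂ : ℝ → ℂ}
    (h₁ : ContinuousOn ℓ₁ (Set.Icc a b)) (h₂ : ContinuousOn ℓ₂ (Set.Icc a b))
    (e₁ : ∀ t ∈ Set.Icc a b, Complex.exp (ℓ₁ t) = f t)
    (e₂ : ∀ t ∈ Set.Icc a b, Complex.exp (ℓ₂ t) = f t) :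
    ℓ₁ b - ℓ₁ a = ℓ₂ b - ℓ₂ a := by
  have h := endpoints_eq_of_exp_eq_one hab (h₁.sub h₂) (fun t ht => by
    rw [Pi.sub_apply, Complex.exp_sub, e₁ t ht, e₂ t ht, div_self]
    rw [← e₁ t ht]; exact Complex.exp_ne_zero _)
  simp only [Pi.sub_apply] at h
  linear_combination h

/-- The characteristic function `φ(x,y) = (1/3)(e^{ix} + e^{iy} + e^{i(x+y)})`. -/
noncomputable def phi : ℝ × ℝ → ℂ := fun p =>
  (1 / 3) * (Complex.exp (Complex.I * p.1) + Complex.exp (Complex.I * p.2) +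
    Complex.exp (Complex.I * (p.1 + p.2)))

/-- `φ` cannot be approximated, locally uniformly, by zero-free continuous functions. -/
theorem no_zero_free_approx_phi :
    ¬ ∃ g : ℕ → (ℝ × ℝ) → ℂ,
      (∀ n, Continuous (g n)) ∧
      (∀ n p, g n p ≠ 0) ∧
      (∀ K : Set (ℝ × ℝ), IsCompact K → TendstoUniformlyOn g phi atTop K) := by
  rintro ⟨g, hgc, hgne, hconv⟩
  have hπ := Real.pi_pos
  have h2π : (0:ℝ) ≤ 2 * π := by linarith
  have hphic : Continuous phi := by
    unfold phi; fun_prop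
  have hphi : ∀ x y : ℝ, phi (x, y) =
      (1 / 3) * (Complex.exp (Complex.I * x) + Complex.exp (Complex.I * y) +
        Complex.exp (Complex.I * ((x:ℂ) + (y:ℂ)))) := fun x y => rfl
  -- special exponential values
  have eπ : Complex.exp (Complex.I * (π:ℝ)) = -1 := by
    rw [mul_comm]; exact Complex.exp_pi_mul_I
  have e2π : Complex.exp (Complex.I * ((2 * π : ℝ):ℂ)) = 1 := by
    rw [show Complex.I * ((2 * π : ℝ):ℂ) = 2 * (π:ℂ) * Complex.I by push_cast; ring]
    exact Complex.exp_two_pi_mul_I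
  -- edge formulas for phi
  have hbot : ∀ x : ℝ, phi (x, 0) = (2 * Complex.exp (Complex.I * x) + 1) / 3 := by
    intro x
    rw [hphi]
    simp only [Complex.ofReal_zero, mul_zero, Complex.exp_zero, add_zero]
    ring
  have htop : ∀ x : ℝ, phi (x, π) = -1 / 3 := by
    intro x
    rw [hphi, mul_add Complex.I, Complex.exp_add, eπ]
    ring
  have hright : ∀ y : ℝ, phi (2 * π, y) = (2 * Complex.exp (Complex.I * y) + 1) / 3 := by
    intro y
    rw [hphi, mul_add Complex.I, Complex.exp_add, e2π]
    ring
  have hleft : ∀ y : ℝ, phi (0, y) = (2 * Complex.exp (Complex.I * y) + 1) / 3 := by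
    intro y
    rw [hphi, mul_add Complex.I, Complex.exp_add]
    simp only [Complex.ofReal_zero, mul_zero, Complex.exp_zero, one_mul]
    ring
  -- lower bound on the edges
  have hnorme : ∀ t : ℝ, ‖Complex.exp (Complex.I * (t:ℂ))‖ = 1 := by
    intro t; rw [mul_comm]; exact Complex.norm_exp_ofReal_mul_I t
  have hlb : ∀ t : ℝ, (1:ℝ) / 3 ≤ ‖(2 * Complex.exp (Complex.I * (t:ℂ)) + 1) / 3‖ := by
    intro t
    have h1 : ‖(2:ℂ) * Complex.exp (Complex.I * (t:ℂ))‖ = 2 := by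
      rw [norm_mul, hnorme]; simp
    have h2 := norm_sub_norm_le ((2:ℂ) * Complex.exp (Complex.I * (t:ℂ))) (-1)
    rw [sub_neg_eq_add, h1] at h2
    have h3 : ‖(-1 : ℂ)‖ = 1 := by simp
    rw [h3] at h2
    rw [norm_div]
    have h4 : ‖(3:ℂ)‖ = 3 := by simp
    rw [h4]
    linarith
  have hlbtop : (1:ℝ) / 3 ≤ ‖(-1 / 3 : ℂ)‖ := by norm_num
  -- the compact rectangle
  set R : Set (ℝ × ℝ) := Set.Icc (0:ℝ) (2 * π) ×ˢ Set.Icc (0:ℝ) π with hR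
  have hRcomp : IsCompact R := isCompact_Icc.prod isCompact_Icc
  -- pick an approximant within 1/3 on R
  have hconvR := hconv R hRcomp
  rw [Metric.tendstoUniformlyOn_iff] at hconvR
  obtain ⟨n, hn⟩ := (hconvR (1/3) (by norm_num)).exists
  set G : ℝ × ℝ → ℂ := g n with hGdef
  have hGc : Continuous G := hgc n
  have hGne : ∀ p, G p ≠ 0 := hgne n
  have hclose : ∀ p ∈ R, dist (phi p) (G p) < 1/3 := hn
  -- closeness to phi on the edges gives slit-plane ratios
  have hedge : ∀ p : ℝ × ℝ, p ∈ R → (1:ℝ)/3 ≤ ‖phi p‖ →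
      phi p ≠ 0 ∧ G p / phi p ∈ Complex.slitPlane := by
    intro p hp hlbp
    have hpne : phi p ≠ 0 := by
      intro h; rw [h] at hlbp; norm_num at hlbp
    refine ⟨hpne, ratio_mem_slitPlane hpne ?_⟩
    rw [← dist_eq_norm, dist_comm]
    exact lt_of_lt_of_le (hclose p hp) hlbp
  -- minimum of ‖G‖ on R
  have hRne : R.Nonempty := ⟨(0, 0), by
    constructor
    · exact ⟨le_refl 0, h2π⟩
    · exact ⟨le_refl 0, hπ.le⟩⟩
  obtain ⟨p₀, hp₀, hminG⟩ := hRcomp.exists_isMinOn hRne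
    (hGc.norm.continuousOn : ContinuousOn (fun p => ‖G p‖) R)
  set m : ℝ := ‖G p₀‖ with hm
  have hmpos : 0 < m := norm_pos_iff.mpr (hGne p₀)
  have hmle : ∀ p ∈ R, m ≤ ‖G p‖ := fun p hp => hminG hp
  -- uniform continuity of G on R
  have hucG := hRcomp.uniformContinuousOn_of_continuous hGc.continuousOn
  obtain ⟨δ, hδpos, hδ⟩ := (Metric.uniformContinuousOn_iff.mp hucG) m hmpos
  -- logarithms along the rows
  have hrow : ∀ y : ℝ, ∃ ℓ : ℝ → ℂ, ContinuousOn ℓ (Set.Icc 0 (2 * π)) ∧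
      ∀ t ∈ Set.Icc 0 (2 * π), Complex.exp (ℓ t) = G (t, y) := fun y =>
    exists_log_on_Icc (fun t => G (t, y))
      (hGc.comp (continuous_id.prodMk continuous_const)) (fun t => hGne _) 0 (2 * π) h2π
  choose L hLc hLe using hrow
  -- logarithms along the two vertical edges
  obtain ⟨ℓR, hℓRc, hℓRe⟩ := exists_log_on_Icc (fun y => G (2 * π, y))
    (hGc.comp (continuous_const.prodMk continuous_id)) (fun y => hGne _) 0 π hπ.le
  obtain ⟨ℓL, hℓLc, hℓLe⟩ := exists_log_on_Icc (fun y => G (0, y))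
    (hGc.comp (continuous_const.prodMk continuous_id)) (fun y => hGne _) 0 π hπ.le
  -- membership shortcuts
  have hm0 : (0:ℝ) ∈ Set.Icc (0:ℝ) (2 * π) := ⟨le_refl 0, h2π⟩
  have hm2π : (2 * π : ℝ) ∈ Set.Icc (0:ℝ) (2 * π) := ⟨h2π, le_refl _⟩
  have hm0' : (0:ℝ) ∈ Set.Icc (0:ℝ) π := ⟨le_refl 0, hπ.le⟩
  have hmπ' : (π : ℝ) ∈ Set.Icc (0:ℝ) π := ⟨hπ.le, le_refl _⟩
  -- the winding increment along row y
  set Φ : ℝ → ℂ := fun y => L y (2 * π) - L y 0 with hΦdef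
  -- continuity of Φ on [0, π]
  have hΦc : ContinuousOn Φ (Set.Icc 0 π) := by
    intro y₀ hy₀
    set F : ℝ → ℂ := fun y => Φ y₀ + Complex.log (G (2 * π, y) / G (2 * π, y₀)) -
      Complex.log (G (0, y) / G (0, y₀)) with hFdef
    have hFy₀ : F y₀ = Φ y₀ := by
      simp [hFdef, div_self (hGne _), Complex.log_one]
    have hqc : ∀ x : ℝ, ContinuousAt (fun y => G (x, y) / G (x, y₀)) y₀ := by
      intro x
      exact ((hGc.comp (continuous_const.prodMk continuous_id)).continuousAt).div
        continuousAt_const (hGne _)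
    have hq1 : ∀ x : ℝ, (fun y => G (x, y) / G (x, y₀)) y₀ ∈ Complex.slitPlane := by
      intro x
      simp only [div_self (hGne (x, y₀))]
      exact Complex.one_mem_slitPlane
    have hFc : ContinuousWithinAt F (Set.Icc 0 π) y₀ := by
      apply ContinuousAt.continuousWithinAt
      exact (continuousAt_const.add
        ((hqc (2 * π)).clog (hq1 (2 * π)))).sub
        ((hqc 0).clog (hq1 0))
    have hev0 : ∀ y ∈ Set.Icc 0 π ∩ Metric.ball y₀ δ, Φ y = F y := by
      rintro y ⟨hy, hyb⟩
      have hratioslit : ∀ x ∈ Set.Icc (0:ℝ) (2 * π),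
          G (x, y) / G (x, y₀) ∈ Complex.slitPlane := by
        intro x hx
        apply ratio_mem_slitPlane (hGne _)
        rw [← dist_eq_norm]
        refine lt_of_lt_of_le ?_ (hmle (x, y₀) ⟨hx, hy₀⟩)
        apply hδ (x, y) ⟨hx, hy⟩ (x, y₀) ⟨hx, hy₀⟩
        rw [Prod.dist_eq]
        simp only [dist_self]
        rw [max_eq_right dist_nonneg]
        exact Metric.mem_ball.mp hyb
      set ℓ₂ : ℝ → ℂ := fun x => L y₀ x + Complex.log (G (x, y) / G (x, y₀)) with hℓ₂def
      have hℓ₂c : ContinuousOn ℓ₂ (Set.Icc 0 (2 * π)) := by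
        apply (hLc y₀).add
        apply ContinuousOn.clog
        · exact ((hGc.comp (continuous_id.prodMk continuous_const)).continuousOn).div
            ((hGc.comp (continuous_id.prodMk continuous_const)).continuousOn)
            (fun x _ => hGne _)
        · exact hratioslit
      have hℓ₂e : ∀ x ∈ Set.Icc (0:ℝ) (2 * π), Complex.exp (ℓ₂ x) = G (x, y) := by
        intro x hx
        rw [hℓ₂def]
        simp only
        rw [Complex.exp_add, hLe y₀ x hx, Complex.exp_log (div_ne_zero (hGne _) (hGne _))]
        rw [mul_comm, div_mul_cancel₀ _ (hGne _)]
      have hinc := log_increment_eq h2π (hLc y) hℓ₂c (hLe y) hℓ₂e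
      rw [hℓ₂def] at hinc
      simp only at hinc
      simp only [hΦdef, hFdef]
      linear_combination hinc
    have hevmem : Set.Icc (0:ℝ) π ∩ Metric.ball y₀ δ ∈ nhdsWithin y₀ (Set.Icc (0:ℝ) π) :=
      Filter.inter_mem self_mem_nhdsWithin
        (mem_nhdsWithin_of_mem_nhds (Metric.ball_mem_nhds y₀ hδpos))
    have hev : Φ =ᶠ[nhdsWithin y₀ (Set.Icc (0:ℝ) π)] F :=
      Filter.eventuallyEq_of_mem hevmem hev0
    exact hFc.congr_of_eventuallyEq hev hFy₀.symm
  -- the total winding around the rectangle vanishes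
  set N : ℝ → ℂ := fun y => Φ y - (ℓR y - ℓL y) with hNdef
  have hNc : ContinuousOn N (Set.Icc 0 π) := (hΦc.sub (hℓRc.sub hℓLc))
  have hNexp : ∀ y ∈ Set.Icc (0:ℝ) π, Complex.exp (N y) = 1 := by
    intro y hy
    rw [hNdef]
    simp only
    rw [hΦdef]
    simp only
    rw [Complex.exp_sub, Complex.exp_sub, Complex.exp_sub,
      hLe y _ hm2π, hLe y _ hm0, hℓRe y hy, hℓLe y hy]
    exact div_self (div_ne_zero (hGne _) (hGne _))
  have hNeq : N π = N 0 := endpoints_eq_of_exp_eq_one hπ.le hNc hNexp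
  -- auxiliary function for explicit logarithms of phi on the edges
  set W : ℝ → ℂ := fun t => 2 + Complex.exp (-(Complex.I * t)) with hWdef
  have hWc : Continuous W := by rw [hWdef]; fun_prop
  have hWre : ∀ t : ℝ, 1 ≤ (W t).re := by
    intro t
    rw [hWdef]
    simp only
    rw [show -(Complex.I * (t:ℂ)) = ((-t : ℝ):ℂ) * Complex.I by push_cast; ring]
    rw [Complex.add_re, Complex.exp_ofReal_mul_I_re, Real.cos_neg]
    have := Real.neg_one_le_cos t
    norm_num
    linarith
  have hWslit : ∀ t : ℝ, W t ∈ Complex.slitPlane := fun t =>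
    Complex.mem_slitPlane_iff.mpr (Or.inl (by linarith [hWre t]))
  have hWne : ∀ t : ℝ, W t ≠ 0 := fun t => Complex.slitPlane_ne_zero (hWslit t)
  have hWexp : ∀ t : ℝ, Complex.exp (Complex.I * t) * W t =
      2 * Complex.exp (Complex.I * t) + 1 := by
    intro t
    rw [hWdef]
    simp only
    have h1 : Complex.exp (Complex.I * (t:ℂ)) * Complex.exp (-(Complex.I * (t:ℂ))) = 1 := by
      rw [Complex.exp_neg]
      exact mul_inv_cancel₀ (Complex.exp_ne_zero _)
    rw [mul_add, h1]
    ring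
  have hW0 : W 0 = 3 := by
    rw [hWdef]
    simp only [Complex.ofReal_zero, mul_zero, neg_zero, Complex.exp_zero]
    norm_num
  have hWπ : W π = 1 := by
    rw [hWdef]
    simp only
    rw [Complex.exp_neg, eπ]
    norm_num
  have hW2π : W (2 * π) = 3 := by
    rw [hWdef]
    simp only
    rw [Complex.exp_neg, e2π]
    norm_num
  have h3ne : (3:ℂ) ≠ 0 := by norm_num
  -- generic facts about the correction term log (G/phi) on edges
  have hulog : ∀ E : ℝ → ℝ × ℝ, Continuous E → ∀ a b : ℝ,
      (∀ t ∈ Set.Icc a b, E t ∈ R ∧ (1:ℝ)/3 ≤ ‖phi (E t)‖) →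
      ContinuousOn (fun t => Complex.log (G (E t) / phi (E t))) (Set.Icc a b) ∧
      ∀ t ∈ Set.Icc a b,
        Complex.exp (Complex.log (G (E t) / phi (E t))) = G (E t) / phi (E t) := by
    intro E hE a b hEm
    constructor
    · apply ContinuousOn.clog
      · exact ((hGc.comp hE).continuousOn).div ((hphic.comp hE).continuousOn)
          (fun t ht => (hedge _ (hEm t ht).1 (hEm t ht).2).1)
      · intro t ht
        exact (hedge _ (hEm t ht).1 (hEm t ht).2).2
    · intro t ht
      exact Complex.exp_log (div_ne_zero (hGne _) (hedge _ (hEm t ht).1 (hEm t ht).2).1)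
  -- bottom edge
  have hmemb : ∀ t ∈ Set.Icc (0:ℝ) (2 * π), ((t, 0) : ℝ × ℝ) ∈ R ∧
      (1:ℝ)/3 ≤ ‖phi (t, 0)‖ := by
    intro t ht
    refine ⟨⟨ht, hm0'⟩, ?_⟩
    rw [hbot]
    exact hlb t
  obtain ⟨hubc, hube⟩ := hulog (fun t => (t, 0)) (continuous_id.prodMk continuous_const)
    0 (2 * π) hmemb
  set ℓb : ℝ → ℂ := fun x => Complex.I * x + Complex.log (W x) - Complex.log 3 +
    Complex.log (G (x, 0) / phi (x, 0)) with hℓbdef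
  have hℓbc : ContinuousOn ℓb (Set.Icc 0 (2 * π)) := by
    rw [hℓbdef]
    exact (((continuous_const.mul Complex.continuous_ofReal).continuousOn.add
      ((hWc.continuousOn).clog (fun t _ => hWslit t))).sub continuousOn_const).add hubc
  have hℓbe : ∀ x ∈ Set.Icc (0:ℝ) (2 * π), Complex.exp (ℓb x) = G (x, 0) := by
    intro x hx
    rw [hℓbdef]
    simp only
    rw [Complex.exp_add, Complex.exp_sub, Complex.exp_add, Complex.exp_log (hWne x),
      Complex.exp_log h3ne, hube x hx, hWexp x, ← hbot x, mul_comm,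
      div_mul_cancel₀ _ (hedge _ (hmemb x hx).1 (hmemb x hx).2).1]
  have h1 := log_increment_eq h2π (hLc 0) hℓbc (hLe 0) hℓbe
  -- top edge
  have hmemt : ∀ t ∈ Set.Icc (0:ℝ) (2 * π), ((t, π) : ℝ × ℝ) ∈ R ∧
      (1:ℝ)/3 ≤ ‖phi (t, π)‖ := by
    intro t ht
    refine ⟨⟨ht, hmπ'⟩, ?_⟩
    rw [htop]
    exact hlbtop
  obtain ⟨hutc, hute⟩ := hulog (fun t => (t, π)) (continuous_id.prodMk continuous_const)
    0 (2 * π) hmemt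
  set ℓt : ℝ → ℂ := fun x => (π:ℂ) * Complex.I - Complex.log 3 +
    Complex.log (G (x, π) / phi (x, π)) with hℓtdef
  have hℓtc : ContinuousOn ℓt (Set.Icc 0 (2 * π)) := by
    rw [hℓtdef]
    exact continuousOn_const.add hutc
  have hℓte : ∀ x ∈ Set.Icc (0:ℝ) (2 * π), Complex.exp (ℓt x) = G (x, π) := by
    intro x hx
    rw [hℓtdef]
    simp only
    rw [Complex.exp_add, Complex.exp_sub, Complex.exp_pi_mul_I, Complex.exp_log h3ne,
      hute x hx, show (-1 : ℂ) / 3 = -1 / 3 by ring, ← htop x, mul_comm,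
      div_mul_cancel₀ _ (hedge _ (hmemt x hx).1 (hmemt x hx).2).1]
  have h2 := log_increment_eq h2π (hLc π) hℓtc (hLe π) hℓte
  -- right edge
  have hmemr : ∀ t ∈ Set.Icc (0:ℝ) π, ((2 * π, t) : ℝ × ℝ) ∈ R ∧
      (1:ℝ)/3 ≤ ‖phi (2 * π, t)‖ := by
    intro t ht
    refine ⟨⟨hm2π, ht⟩, ?_⟩
    rw [hright]
    exact hlb t
  obtain ⟨hurc, hure⟩ := hulog (fun t => (2 * π, t)) (continuous_const.prodMk continuous_id)
    0 π hmemr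
  set ℓr : ℝ → ℂ := fun y => Complex.I * y + Complex.log (W y) - Complex.log 3 +
    Complex.log (G (2 * π, y) / phi (2 * π, y)) with hℓrdef
  have hℓrc : ContinuousOn ℓr (Set.Icc 0 π) := by
    rw [hℓrdef]
    exact (((continuous_const.mul Complex.continuous_ofReal).continuousOn.add
      ((hWc.continuousOn).clog (fun t _ => hWslit t))).sub continuousOn_const).add hurc
  have hℓre : ∀ y ∈ Set.Icc (0:ℝ) π, Complex.exp (ℓr y) = G (2 * π, y) := by
    intro y hy
    rw [hℓrdef]
    simp only
    rw [Complex.exp_add, Complex.exp_sub, Complex.exp_add, Complex.exp_log (hWne y),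
      Complex.exp_log h3ne, hure y hy, hWexp y, ← hright y, mul_comm,
      div_mul_cancel₀ _ (hedge _ (hmemr y hy).1 (hmemr y hy).2).1]
  have h3 := log_increment_eq hπ.le hℓRc hℓrc hℓRe hℓre
  -- left edge
  have hmeml : ∀ t ∈ Set.Icc (0:ℝ) π, ((0, t) : ℝ × ℝ) ∈ R ∧
      (1:ℝ)/3 ≤ ‖phi (0, t)‖ := by
    intro t ht
    refine ⟨⟨hm0, ht⟩, ?_⟩
    rw [hleft]
    exact hlb t
  obtain ⟨hulc, hule⟩ := hulog (fun t => (0, t)) (continuous_const.prodMk continuous_id)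
    0 π hmeml
  set ℓl : ℝ → ℂ := fun y => Complex.I * y + Complex.log (W y) - Complex.log 3 +
    Complex.log (G (0, y) / phi (0, y)) with hℓldef
  have hℓlc : ContinuousOn ℓl (Set.Icc 0 π) := by
    rw [hℓldef]
    exact (((continuous_const.mul Complex.continuous_ofReal).continuousOn.add
      ((hWc.continuousOn).clog (fun t _ => hWslit t))).sub continuousOn_const).add hulc
  have hℓle : ∀ y ∈ Set.Icc (0:ℝ) π, Complex.exp (ℓl y) = G (0, y) := by
    intro y hy
    rw [hℓldef]
    simp only
    rw [Complex.exp_add, Complex.exp_sub, Complex.exp_add, Complex.exp_log (hWne y),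
      Complex.exp_log h3ne, hule y hy, hWexp y, ← hleft y, mul_comm,
      div_mul_cancel₀ _ (hedge _ (hmeml y hy).1 (hmeml y hy).2).1]
  have h4 := log_increment_eq hπ.le hℓLc hℓlc hℓLe hℓle
  -- assemble the contradiction
  rw [hℓbdef] at h1
  rw [hℓtdef] at h2
  rw [hℓrdef] at h3
  rw [hℓldef] at h4
  simp only [hW0, hWπ, hW2π, Complex.log_one, Complex.ofReal_zero, mul_zero] at h1 h2 h3 h4
  rw [hNdef] at hNeq
  simp only [hΦdef] at hNeq
  have hfinal : Complex.I * ((2 * π : ℝ):ℂ) = 0 := by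
    linear_combination -h1 + h2 - h3 + h4 - hNeq
  have h2πne : ((2 * π : ℝ):ℂ) ≠ 0 := by
    exact_mod_cast ne_of_gt (by linarith : (0:ℝ) < 2 * π)
  exact mul_ne_zero Complex.I_ne_zero h2πne hfinal
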